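/- The asymmetric grid failprone system 𝔽 = [ℱ_1, …, ℱ_d], consisting of the failprone system for A_i-believers for each attribute A_i, is B³-resilient: for all indices i, j, all F_i ∈ ℱ_i, all F_j ∈ ℱ_j, and all F_{i,j} ∈ ℱ_i* ∩ ℱ_j*, the union F_i ∪ F_j ∪ F_{i,j} is a proper subset of 𝒫. -/

import Mathlib

/-- `f_i = ⌈k_i/3⌉ − 1`: number of attribute values of `A i` with full failures. -/
noncomputable def fNum {d : ℕ} (A : Fin d → Type) [∀ j, Fintype (A j)] (i : Fin d) : ℤ :=
  ⌈(Fintype.card (A i) : ℚ) / 3⌉ - 1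

/-- `α_i = ⌈n/(6k_i)⌉ − 1`: number of partial-failure processes per attribute value. -/
noncomputable def alphaNum {d : ℕ} (A : Fin d → Type) [∀ j, Fintype (A j)] (i : Fin d) : ℤ :=
  ⌈(Fintype.card (∀ j, A j) : ℚ) / (6 * (Fintype.card (A i) : ℚ))⌉ - 1

/-- `full(F) = 𝒫|_{A_i ∈ 𝒜'}`: the full failures determined by a set `𝒜'` of values of `A i`. -/
def fullOf {d : ℕ} (A : Fin d → Type) [∀ j, Fintype (A j)] [∀ j, DecidableEq (A j)]
    (i : Fin d) (A' : Finset (A i)) : Finset (∀ j, A j) :=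
  Finset.univ.filter (fun p => p i ∈ A')

/-- `partial(F) = ⊔_{a ∈ 𝒜_i ∖ 𝒜'} X_a`: the partial failures. -/
def partialOf {d : ℕ} (A : Fin d → Type) [∀ j, Fintype (A j)] [∀ j, DecidableEq (A j)]
    (i : Fin d) (A' : Finset (A i)) (X : A i → Finset (∀ j, A j)) : Finset (∀ j, A j) :=
  A'ᶜ.biUnion X

/-- `F` decomposes as `F = full(F) ⊔ partial(F)` with witnesses `A'` (of prescribed
cardinality `fval`) and `X`, where `X a ⊆ 𝒫|_{A_i = a}` and `|X a| = α_i` for every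
`a ∈ 𝒜_i ∖ 𝒜'`. -/
noncomputable def IsDecompGen {d : ℕ} (A : Fin d → Type) [∀ j, Fintype (A j)]
    [∀ j, DecidableEq (A j)] (i : Fin d) (fval : ℤ) (F : Finset (∀ j, A j))
    (A' : Finset (A i)) (X : A i → Finset (∀ j, A j)) : Prop :=
  (A'.card : ℤ) = fval ∧
  (∀ a ∈ A'ᶜ, X a ⊆ Finset.univ.filter (fun p => p i = a)) ∧
  (∀ a ∈ A'ᶜ, ((X a).card : ℤ) = alphaNum A i) ∧
  F = fullOf A i A' ∪ partialOf A i A' X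

/-- Membership in the failprone system `ℱ_i` for `A_i`-believers. -/
noncomputable def IsFailprone {d : ℕ} (A : Fin d → Type) [∀ j, Fintype (A j)]
    [∀ j, DecidableEq (A j)] (i : Fin d) (F : Finset (∀ j, A j)) : Prop :=
  ∃ A' X, IsDecompGen A i (fNum A i) F A' X

/-- `ℱ*`: the collection of all subsets of members of the failprone system `ℱ_i`. -/
noncomputable def InFailproneStar {d : ℕ} (A : Fin d → Type) [∀ j, Fintype (A j)]
    [∀ j, DecidableEq (A j)] (i : Fin d) (F : Finset (∀ j, A j)) : Prop :=
  ∃ G, IsFailprone A i G ∧ F ⊆ G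

open Finset

section Aux
set_option linter.unusedSectionVars false
variable {d : ℕ} {A : Fin d → Type} [∀ j, Fintype (A j)] [∀ j, DecidableEq (A j)]

lemma col_card_eq (i : Fin d) (a a' : A i) :
    #{p : ∀ l, A l | p i = a} = #{p : ∀ l, A l | p i = a'} := by
  apply Finset.card_nbij' (fun p => Function.update p i a') (fun p => Function.update p i a)
  · intro p hp; simp
  · intro p hp; simp
  · intro p hp
    simp only [mem_coe, mem_filter, mem_univ, true_and] at hp
    beta_reduce
    rw [Function.update_idem, ← hp, Function.update_eq_self]
  · intro p hp
    simp only [mem_coe, mem_filter, mem_univ, true_and] at hp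
    beta_reduce
    rw [Function.update_idem, ← hp, Function.update_eq_self]

lemma slice1_card (i : Fin d) (S : Finset (A i)) (a0 : A i) :
    #{p : ∀ l, A l | p i ∈ S} = S.card * #{p : ∀ l, A l | p i = a0} := by
  rw [Finset.card_eq_sum_card_fiberwise (f := fun p : ∀ l, A l => p i) (t := S)
    (by intro x hx; simpa using hx)]
  have h1 : ∀ b ∈ S, #{a ∈ ({p : ∀ l, A l | p i ∈ S}) | a i = b}
      = #{p : ∀ l, A l | p i = a0} := by
    intro b hb
    rw [Finset.filter_filter, ← col_card_eq i b a0]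
    congr 1
    ext p
    simp only [mem_filter, mem_univ, true_and, and_iff_right_iff_imp]
    intro h; rw [h]; exact hb
  rw [Finset.sum_congr rfl h1, Finset.sum_const, smul_eq_mul]

lemma fiber_card_eq {i j : Fin d} (hij : i ≠ j) (a a' : A i) (b b' : A j) :
    #{p : ∀ l, A l | p i = a ∧ p j = b} = #{p : ∀ l, A l | p i = a' ∧ p j = b'} := by
  apply Finset.card_nbij' (fun p => Function.update (Function.update p i a') j b')
    (fun p => Function.update (Function.update p i a) j b)
  · intro p hp
    simp [Function.update_of_ne hij]
  · intro p hp
    simp [Function.update_of_ne hij]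
  · intro p hp
    simp only [mem_coe, mem_filter, mem_univ, true_and] at hp
    funext l
    rcases eq_or_ne l j with rfl | hlj
    · simp [Function.update_of_ne hij, hp.2]
    · rcases eq_or_ne l i with rfl | hli
      · simp [Function.update_of_ne hlj, hp.1]
      · simp [Function.update_of_ne hlj, Function.update_of_ne hli]
  · intro p hp
    simp only [mem_coe, mem_filter, mem_univ, true_and] at hp
    funext l
    rcases eq_or_ne l j with rfl | hlj
    · simp [Function.update_of_ne hij, hp.2]
    · rcases eq_or_ne l i with rfl | hli
      · simp [Function.update_of_ne hlj, hp.1]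
      · simp [Function.update_of_ne hlj, Function.update_of_ne hli]

lemma slice2_card {i j : Fin d} (hij : i ≠ j) (S : Finset (A i)) (T : Finset (A j))
    (a0 : A i) (b0 : A j) :
    #{p : ∀ l, A l | p i ∈ S ∧ p j ∈ T}
      = S.card * T.card * #{p : ∀ l, A l | p i = a0 ∧ p j = b0} := by
  rw [Finset.card_eq_sum_card_fiberwise (f := fun p : ∀ l, A l => (p i, p j)) (t := S ×ˢ T)
    (by intro x hx; simp only [mem_coe, mem_filter, mem_univ, true_and] at hx; simpa using hx)]
  have h1 : ∀ b ∈ S ×ˢ T, #{a ∈ ({p : ∀ l, A l | p i ∈ S ∧ p j ∈ T}) | (a i, a j) = b}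
      = #{p : ∀ l, A l | p i = a0 ∧ p j = b0} := by
    rintro ⟨b1, b2⟩ hb
    simp only [Finset.mem_product] at hb
    rw [← fiber_card_eq hij b1 a0 b2 b0]
    congr 1
    ext p
    simp only [mem_filter, mem_univ, true_and, Prod.mk.injEq]
    constructor
    · rintro ⟨-, h1, h2⟩; exact ⟨h1, h2⟩
    · rintro ⟨h1, h2⟩; exact ⟨⟨h1 ▸ hb.1, h2 ▸ hb.2⟩, h1, h2⟩
  rw [Finset.sum_congr rfl h1, Finset.sum_const, smul_eq_mul, Finset.card_product]

lemma fNum_le (i : Fin d) : 3 * fNum A i ≤ (Fintype.card (A i) : ℤ) - 1 := by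
  have h := Int.ceil_lt_add_one ((Fintype.card (A i) : ℚ) / 3)
  have h2 : (fNum A i : ℚ) < (Fintype.card (A i) : ℚ) / 3 := by
    unfold fNum; push_cast; linarith
  have h3 : (3 * fNum A i : ℚ) < (Fintype.card (A i) : ℚ) := by linarith
  have h4 : 3 * fNum A i < (Fintype.card (A i) : ℤ) := by exact_mod_cast h3
  omega

lemma alpha_le (i : Fin d) (m : ℕ)
    (hm : Fintype.card (∀ l, A l) = Fintype.card (A i) * m)
    (hki : 0 < Fintype.card (A i)) :
    6 * alphaNum A i ≤ (m : ℤ) - 1 := by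
  have hq : ((Fintype.card (∀ l, A l) : ℚ)) / (6 * (Fintype.card (A i) : ℚ))
      = (m : ℚ) / 6 := by
    rw [hm]
    push_cast
    have : (Fintype.card (A i) : ℚ) ≠ 0 := by positivity
    field_simp
  have h := Int.ceil_lt_add_one ((m : ℚ) / 6)
  have h2 : (alphaNum A i : ℚ) < (m : ℚ) / 6 := by
    unfold alphaNum; rw [hq]; push_cast; linarith
  have h3 : (6 * alphaNum A i : ℚ) < (m : ℚ) := by linarith
  have h4 : 6 * alphaNum A i < (m : ℤ) := by exact_mod_cast h3
  omega

lemma mem_decomp {i : Fin d} {fv : ℤ} {F : Finset (∀ l, A l)} {A' : Finset (A i)}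
    {X : A i → Finset (∀ l, A l)} (h : IsDecompGen A i fv F A' X)
    {p : ∀ l, A l} (hp : p ∈ F) :
    p i ∈ A' ∨ (p i ∉ A' ∧ p ∈ X (p i)) := by
  obtain ⟨-, hsub, -, heq⟩ := h
  rw [heq] at hp
  rcases Finset.mem_union.1 hp with hp | hp
  · left; simpa [fullOf] using hp
  · right
    obtain ⟨a, ha, hpa⟩ := Finset.mem_biUnion.1 hp
    have : p i = a := by simpa using hsub a ha hpa
    subst this
    exact ⟨by simpa using ha, hpa⟩

lemma partial_card_le {i : Fin d} {fv : ℤ} {F : Finset (∀ l, A l)} {A' : Finset (A i)}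
    {X : A i → Finset (∀ l, A l)} (h : IsDecompGen A i fv F A' X)
    (S : Finset (A i)) (hS : S ⊆ A'ᶜ) :
    (#(S.biUnion X) : ℤ) ≤ S.card * alphaNum A i := by
  obtain ⟨-, -, hcard, -⟩ := h
  calc (#(S.biUnion X) : ℤ) ≤ ((∑ a ∈ S, #(X a) : ℕ) : ℤ) := by
        exact_mod_cast Finset.card_biUnion_le
    _ = ∑ a ∈ S, (#(X a) : ℤ) := by push_cast; rfl
    _ = ∑ a ∈ S, alphaNum A i := Finset.sum_congr rfl (fun a ha => hcard a (hS ha))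
    _ = S.card * alphaNum A i := by rw [Finset.sum_const]; push_cast; ring

lemma alpha_nonneg {i : Fin d} {fv : ℤ} {F : Finset (∀ l, A l)} {A' : Finset (A i)}
    {X : A i → Finset (∀ l, A l)} (h : IsDecompGen A i fv F A' X)
    (hne : A'ᶜ.Nonempty) : 0 ≤ alphaNum A i := by
  obtain ⟨a, ha⟩ := hne
  have := h.2.2.1 a ha
  rw [← this]
  positivity

lemma card_le_fintype {β : Type*} [Fintype β] [DecidableEq β] (s : Finset β) :
    s.card ≤ Fintype.card β := s.card_le_univ.trans_eq Finset.card_univ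

lemma key_ineq (ki kj fi fj s ai aj r c : ℤ)
    (hki : 4 ≤ ki) (hkj : 4 ≤ kj)
    (hfi0 : 0 ≤ fi) (hfj0 : 0 ≤ fj) (hfi : 3 * fi ≤ ki - 1) (hfj : 3 * fj ≤ kj - 1)
    (hai0 : 0 ≤ ai) (haj0 : 0 ≤ aj) (hai : 6 * ai ≤ kj * s - 1) (haj : 6 * aj ≤ ki * s - 1)
    (hr0 : 0 ≤ r) (hrf : r ≤ fi) (hc0 : 0 ≤ c) (hcf : c ≤ fj) (hs : 0 ≤ s) :
    (ki - fi) * ai + (kj - fj) * aj +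
      (r * c * s + (ki - fi - r) * ai + (kj - fj - c) * aj)
      < (ki - fi) * (kj - fj) * s := by
  have hpi : (0:ℤ) ≤ ki - fi := by linarith
  have hpj : (0:ℤ) ≤ kj - fj := by linarith
  have hui : (0:ℤ) ≤ ki - 1 - 3 * fi := by linarith
  have huj : (0:ℤ) ≤ kj - 1 - 3 * fj := by linarith
  have hki0 : (0:ℤ) ≤ ki := by linarith
  have hkj0 : (0:ℤ) ≤ kj := by linarith
  have hslai : (0:ℤ) ≤ kj * s - 1 - 6 * ai := by linarith
  have hslaj : (0:ℤ) ≤ ki * s - 1 - 6 * aj := by linarith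
  have hC1 : 2 * (ki - fi) * ai + 2 * (kj - fj) * aj < (ki - fi) * (kj - fj) * s := by
    nlinarith [mul_nonneg hpi hslai, mul_nonneg hpj hslaj,
      mul_nonneg (mul_nonneg hs hki0) huj, mul_nonneg (mul_nonneg hs hkj0) hui,
      mul_nonneg (mul_nonneg hs hui) huj, mul_nonneg hs hki0, mul_nonneg hs hkj0]
  have hC2 : (2 * (ki - fi) - fi) * ai + (2 * (kj - fj) - fj) * aj + fi * fj * s
      < (ki - fi) * (kj - fj) * s := by
    nlinarith [mul_nonneg (by linarith : (0:ℤ) ≤ 2 * (ki - fi) - fi) hslai,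
      mul_nonneg (by linarith : (0:ℤ) ≤ 2 * (kj - fj) - fj) hslaj,
      mul_nonneg (mul_nonneg hs hki0) huj, mul_nonneg (mul_nonneg hs hkj0) hui,
      mul_nonneg hs hki0, mul_nonneg hs hkj0]
  rcases le_or_gt (r * s) aj with h1 | h1
  · have e1 : c * (r * s) ≤ c * aj := mul_le_mul_of_nonneg_left h1 hc0
    have e2 : 0 ≤ r * ai := mul_nonneg hr0 hai0
    nlinarith [hC1]
  · have e1 : c * (r * s - aj) ≤ fj * (r * s - aj) :=
      mul_le_mul_of_nonneg_right hcf (by linarith)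
    rcases le_or_gt (fj * s) ai with h2 | h2
    · have e3 : r * (fj * s) ≤ r * ai := mul_le_mul_of_nonneg_left h2 hr0
      have e4 : 0 ≤ fj * aj := mul_nonneg hfj0 haj0
      nlinarith [hC1]
    · have e3 : r * (fj * s - ai) ≤ fi * (fj * s - ai) :=
        mul_le_mul_of_nonneg_right hrf (by linarith)
      nlinarith [hC2]

end Aux

/-- **B³ resilience of `𝔽`.**
The asymmetric grid failprone system `𝔽 = [ℱ_1, …, ℱ_d]` is B³-resilient: for all
indices `i, j`, all `F_i ∈ ℱ_i`, `F_j ∈ ℱ_j`, and all `F_{i,j} ∈ ℱ_i* ∩ ℱ_j*`, the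
union `F_i ∪ F_j ∪ F_{i,j}` is a proper subset of the universe `𝒫`. -/
theorem stmt9 (d : ℕ) (A : Fin d → Type) [∀ j, Fintype (A j)] [∀ j, DecidableEq (A j)]
    (hk : ∀ j, 4 ≤ Fintype.card (A j)) (i j : Fin d)
    (Fi Fj Fij : Finset (∀ l, A l))
    (hFi : IsFailprone A i Fi) (hFj : IsFailprone A j Fj)
    (hFij_i : InFailproneStar A i Fij) (hFij_j : InFailproneStar A j Fij) :
    Fi ∪ Fj ∪ Fij ⊂ Finset.univ := by
  classical
  haveI hne : ∀ l, Nonempty (A l) := fun l =>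
    Fintype.card_pos_iff.1 (lt_of_lt_of_le (by norm_num) (hk l))
  obtain ⟨R, X, hFiD⟩ := hFi
  obtain ⟨Gi, ⟨R', X', hGiD⟩, hsubGi⟩ := hFij_i
  rw [Finset.ssubset_iff_of_subset (Finset.subset_univ _)]
  rcases eq_or_ne i j with rfl | hij
  · -- CASE i = j
    obtain ⟨C, Y, hFjD⟩ := hFj
    -- pick a not in R ∪ C ∪ R'
    have hcards : ((R ∪ C ∪ R').card : ℤ) < (Fintype.card (A i) : ℤ) := by
      have h1 : (R ∪ C ∪ R').card ≤ R.card + C.card + R'.card := by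
        calc (R ∪ C ∪ R').card ≤ (R ∪ C).card + R'.card := Finset.card_union_le _ _
          _ ≤ R.card + C.card + R'.card := by
              have := Finset.card_union_le R C; omega
      have h2 := fNum_le (A := A) i
      have := hFiD.1; have := hFjD.1; have := hGiD.1
      have h1' : ((R ∪ C ∪ R').card : ℤ) ≤ (R.card : ℤ) + C.card + R'.card := by
        exact_mod_cast h1
      linarith
    have hcompl : ((R ∪ C ∪ R')ᶜ).Nonempty := by
      rw [← Finset.card_pos, Finset.card_compl]
      have : (R ∪ C ∪ R').card < Fintype.card (A i) := by exact_mod_cast hcards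
      omega
    obtain ⟨a, ha⟩ := hcompl
    rw [Finset.mem_compl] at ha
    have haR : a ∉ R := fun h => ha (by simp [h])
    have haC : a ∉ C := fun h => ha (by simp [h])
    have haR' : a ∉ R' := fun h => ha (by simp [h])
    set col : Finset (∀ l, A l) := {p : ∀ l, A l | p i = a} with hcol
    have hn : Fintype.card (∀ l, A l) = Fintype.card (A i) * #col := by
      have := slice1_card (A := A) i Finset.univ a
      simp only [Finset.mem_univ, Finset.filter_true] at this
      rw [← Finset.card_univ (α := ∀ l, A l)]
      simpa [Finset.card_univ] using this
    have halpha : 6 * alphaNum A i ≤ (#col : ℤ) - 1 :=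
      alpha_le i _ hn (by have := hk i; omega)
    -- col is not covered
    suffices hns : ¬ (col ⊆ Fi ∪ Fj ∪ Fij) by
      obtain ⟨p, hp1, hp2⟩ := Finset.not_subset.1 hns
      exact ⟨p, Finset.mem_univ p, hp2⟩
    intro hsub
    have hcov : col ⊆ (X a) ∪ (Y a) ∪ (X' a) := by
      intro p hp
      have hpa : p i = a := by simpa [hcol] using hp
      rcases Finset.mem_union.1 (hsub hp) with hp' | hp'
      · rcases Finset.mem_union.1 hp' with hp'' | hp''
        · rcases mem_decomp hFiD hp'' with h | h
          · exact absurd (hpa ▸ h) haR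
          · exact Finset.mem_union_left _ (Finset.mem_union_left _ (hpa ▸ h.2))
        · rcases mem_decomp hFjD hp'' with h | h
          · exact absurd (hpa ▸ h) haC
          · exact Finset.mem_union_left _ (Finset.mem_union_right _ (hpa ▸ h.2))
      · rcases mem_decomp hGiD (hsubGi hp') with h | h
        · exact absurd (hpa ▸ h) haR'
        · exact Finset.mem_union_right _ (hpa ▸ h.2)
    have hXa : (#(X a) : ℤ) = alphaNum A i := hFiD.2.2.1 a (Finset.mem_compl.2 haR)
    have hYa : (#(Y a) : ℤ) = alphaNum A i := hFjD.2.2.1 a (Finset.mem_compl.2 haC)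
    have hX'a : (#(X' a) : ℤ) = alphaNum A i := hGiD.2.2.1 a (Finset.mem_compl.2 haR')
    have hann : 0 ≤ alphaNum A i := by rw [← hXa]; positivity
    have hcardle : #col ≤ #(X a) + #(Y a) + #(X' a) := by
      calc #col ≤ #((X a) ∪ (Y a) ∪ (X' a)) := Finset.card_le_card hcov
        _ ≤ #((X a) ∪ (Y a)) + #(X' a) := Finset.card_union_le _ _
        _ ≤ #(X a) + #(Y a) + #(X' a) := by
            have := Finset.card_union_le (X a) (Y a); omega
    have hcardle' : (#col : ℤ) ≤ (#(X a) : ℤ) + #(Y a) + #(X' a) := by exact_mod_cast hcardle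
    rw [hXa, hYa, hX'a] at hcardle'
    linarith
  · -- CASE i ≠ j
    obtain ⟨C, Y, hFjD⟩ := hFj
    obtain ⟨Gj, ⟨C', Y', hGjD⟩, hsubGj⟩ := hFij_j
    obtain ⟨a0⟩ := hne i
    obtain ⟨b0⟩ := hne j
    set s : ℕ := #{p : ∀ l, A l | p i = a0 ∧ p j = b0} with hs
    have hn2 : Fintype.card (∀ l, A l) = Fintype.card (A i) * (Fintype.card (A j) * s) := by
      have h := slice2_card (A := A) hij (Finset.univ (α := A i)) (Finset.univ (α := A j)) a0 b0
      simp only [Finset.mem_univ, true_and, and_true, Finset.filter_true,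
        Finset.card_univ] at h
      rw [← hs] at h
      rw [h]; ring
    have hn2' : Fintype.card (∀ l, A l) = Fintype.card (A j) * (Fintype.card (A i) * s) := by
      rw [hn2]; ring
    have hkipos : 0 < Fintype.card (A i) := lt_of_lt_of_le (by norm_num) (hk i)
    have hkjpos : 0 < Fintype.card (A j) := lt_of_lt_of_le (by norm_num) (hk j)
    have halphai : 6 * alphaNum A i ≤ ((Fintype.card (A j) * s : ℕ) : ℤ) - 1 :=
      alpha_le i (Fintype.card (A j) * s) hn2 hkipos
    have halphaj : 6 * alphaNum A j ≤ ((Fintype.card (A i) * s : ℕ) : ℤ) - 1 :=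
      alpha_le j (Fintype.card (A i) * s) hn2' hkjpos
    set region : Finset (∀ l, A l) := {p : ∀ l, A l | p i ∈ Rᶜ ∧ p j ∈ Cᶜ} with hregdef
    have hreg : #region = Rᶜ.card * Cᶜ.card * s := slice2_card hij Rᶜ Cᶜ a0 b0
    set B : Finset (∀ l, A l) := {p : ∀ l, A l | p i ∈ R' \ R ∧ p j ∈ C' \ C} with hBdef
    have hB : #B = (R' \ R).card * (C' \ C).card * s := slice2_card hij _ _ a0 b0
    set P : Finset (∀ l, A l) := ((R ∪ R')ᶜ).biUnion X' with hPdef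
    set Q : Finset (∀ l, A l) := ((C ∪ C')ᶜ).biUnion Y' with hQdef
    have hPle : (#P : ℤ) ≤ ((R ∪ R')ᶜ.card : ℤ) * alphaNum A i :=
      partial_card_le hGiD ((R ∪ R')ᶜ)
        (Finset.compl_subset_compl.2 Finset.subset_union_right)
    have hQle : (#Q : ℤ) ≤ ((C ∪ C')ᶜ.card : ℤ) * alphaNum A j :=
      partial_card_le hGjD ((C ∪ C')ᶜ)
        (Finset.compl_subset_compl.2 Finset.subset_union_right)
    -- coverage inclusions
    have hmemreg : ∀ p ∈ region, p i ∉ R ∧ p j ∉ C := by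
      intro p hp
      have := Finset.mem_filter.1 hp
      simpa using this.2
    have hFiIncl : Fi ∩ region ⊆ Rᶜ.biUnion X := by
      intro p hp
      obtain ⟨hp1, hp2⟩ := Finset.mem_inter.1 hp
      rcases mem_decomp hFiD hp1 with h | h
      · exact absurd h (hmemreg p hp2).1
      · exact Finset.mem_biUnion.2 ⟨p i, Finset.mem_compl.2 h.1, h.2⟩
    have hFjIncl : Fj ∩ region ⊆ Cᶜ.biUnion Y := by
      intro p hp
      obtain ⟨hp1, hp2⟩ := Finset.mem_inter.1 hp
      rcases mem_decomp hFjD hp1 with h | h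
      · exact absurd h (hmemreg p hp2).2
      · exact Finset.mem_biUnion.2 ⟨p j, Finset.mem_compl.2 h.1, h.2⟩
    have hFijIncl : Fij ∩ region ⊆ B ∪ P ∪ Q := by
      intro p hp
      obtain ⟨hp1, hp2⟩ := Finset.mem_inter.1 hp
      obtain ⟨hpR, hpC⟩ := hmemreg p hp2
      rcases mem_decomp hGiD (hsubGi hp1) with hR' | hXp
      · rcases mem_decomp hGjD (hsubGj hp1) with hC' | hYp
        · refine Finset.mem_union_left _ (Finset.mem_union_left _ ?_)
          simp only [hBdef, Finset.mem_filter, Finset.mem_univ, true_and,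
            Finset.mem_sdiff]
          exact ⟨⟨hR', hpR⟩, ⟨hC', hpC⟩⟩
        · refine Finset.mem_union_right _ ?_
          refine Finset.mem_biUnion.2 ⟨p j, ?_, hYp.2⟩
          simp only [Finset.mem_compl, Finset.mem_union]
          tauto
      · refine Finset.mem_union_left _ (Finset.mem_union_right _ ?_)
        refine Finset.mem_biUnion.2 ⟨p i, ?_, hXp.2⟩
        simp only [Finset.mem_compl, Finset.mem_union]
        tauto
    -- suppose region covered
    suffices hns : ¬ (region ⊆ Fi ∪ Fj ∪ Fij) by
      obtain ⟨p, hp1, hp2⟩ := Finset.not_subset.1 hns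
      exact ⟨p, Finset.mem_univ p, hp2⟩
    intro hsub
    have hcov : region ⊆ (Fi ∩ region) ∪ (Fj ∩ region) ∪ (Fij ∩ region) := by
      intro p hp
      rcases Finset.mem_union.1 (hsub hp) with hp' | hp'
      · rcases Finset.mem_union.1 hp' with hp'' | hp''
        · exact Finset.mem_union_left _
            (Finset.mem_union_left _ (Finset.mem_inter.2 ⟨hp'', hp⟩))
        · exact Finset.mem_union_left _
            (Finset.mem_union_right _ (Finset.mem_inter.2 ⟨hp'', hp⟩))
      · exact Finset.mem_union_right _ (Finset.mem_inter.2 ⟨hp', hp⟩)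
    have hcard1 : #region ≤ #(Rᶜ.biUnion X) + #(Cᶜ.biUnion Y) + (#B + #P + #Q) := by
      have c1 : #region ≤ #(Fi ∩ region) + #(Fj ∩ region) + #(Fij ∩ region) := by
        calc #region ≤ #((Fi ∩ region) ∪ (Fj ∩ region) ∪ (Fij ∩ region)) :=
              Finset.card_le_card hcov
          _ ≤ #((Fi ∩ region) ∪ (Fj ∩ region)) + #(Fij ∩ region) :=
              Finset.card_union_le _ _
          _ ≤ #(Fi ∩ region) + #(Fj ∩ region) + #(Fij ∩ region) :=
              Nat.add_le_add_right (Finset.card_union_le _ _) _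
      have c2 : #(Fi ∩ region) ≤ #(Rᶜ.biUnion X) := Finset.card_le_card hFiIncl
      have c3 : #(Fj ∩ region) ≤ #(Cᶜ.biUnion Y) := Finset.card_le_card hFjIncl
      have c4 : #(Fij ∩ region) ≤ #B + #P + #Q := by
        calc #(Fij ∩ region) ≤ #(B ∪ P ∪ Q) := Finset.card_le_card hFijIncl
          _ ≤ #(B ∪ P) + #Q := Finset.card_union_le _ _
          _ ≤ #B + #P + #Q := Nat.add_le_add_right (Finset.card_union_le _ _) _
      calc #region ≤ #(Fi ∩ region) + #(Fj ∩ region) + #(Fij ∩ region) := c1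
        _ ≤ #(Rᶜ.biUnion X) + #(Cᶜ.biUnion Y) + (#B + #P + #Q) := by
            exact Nat.add_le_add (Nat.add_le_add c2 c3) c4
    -- integer arithmetic
    have hXle : (#(Rᶜ.biUnion X) : ℤ) ≤ (Rᶜ.card : ℤ) * alphaNum A i :=
      partial_card_le hFiD Rᶜ (le_refl _)
    have hYle : (#(Cᶜ.biUnion Y) : ℤ) ≤ (Cᶜ.card : ℤ) * alphaNum A j :=
      partial_card_le hFjD Cᶜ (le_refl _)
    have hRcard : ((Rᶜ).card : ℤ) = (Fintype.card (A i) : ℤ) - fNum A i := by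
      rw [Finset.card_compl, Nat.cast_sub (card_le_fintype R), hFiD.1]
    have hCcard : ((Cᶜ).card : ℤ) = (Fintype.card (A j) : ℤ) - fNum A j := by
      rw [Finset.card_compl, Nat.cast_sub (card_le_fintype C), hFjD.1]
    have hRR'card : (((R ∪ R')ᶜ).card : ℤ)
        = (Fintype.card (A i) : ℤ) - fNum A i - ((R' \ R).card : ℤ) := by
      rw [Finset.card_compl, Nat.cast_sub (card_le_fintype _)]
      have h5 : (R ∪ R').card = R.card + (R' \ R).card := by
        rw [Finset.union_comm, ← Finset.card_sdiff_add_card, Nat.add_comm]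
      rw [h5]
      push_cast
      rw [hFiD.1]
      ring
    have hCC'card : (((C ∪ C')ᶜ).card : ℤ)
        = (Fintype.card (A j) : ℤ) - fNum A j - ((C' \ C).card : ℤ) := by
      rw [Finset.card_compl, Nat.cast_sub (card_le_fintype _)]
      have h5 : (C ∪ C').card = C.card + (C' \ C).card := by
        rw [Finset.union_comm, ← Finset.card_sdiff_add_card, Nat.add_comm]
      rw [h5]
      push_cast
      rw [hFjD.1]
      ring
    have hrfi : ((R' \ R).card : ℤ) ≤ fNum A i := by
      rw [← hGiD.1]
      exact_mod_cast Finset.card_le_card Finset.sdiff_subset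
    have hcfj : ((C' \ C).card : ℤ) ≤ fNum A j := by
      rw [← hGjD.1]
      exact_mod_cast Finset.card_le_card Finset.sdiff_subset
    have hfi0 : 0 ≤ fNum A i := by rw [← hFiD.1]; positivity
    have hfj0 : 0 ≤ fNum A j := by rw [← hFjD.1]; positivity
    have hfiB := fNum_le (A := A) i
    have hfjB := fNum_le (A := A) j
    have hRcne : Rᶜ.Nonempty := by
      rw [← Finset.card_pos]
      have h6 : (0:ℤ) < (Rᶜ.card : ℤ) := by
        rw [hRcard]
        have : (4:ℤ) ≤ (Fintype.card (A i) : ℤ) := by exact_mod_cast hk i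
        linarith
      exact_mod_cast h6
    have hCcne : Cᶜ.Nonempty := by
      rw [← Finset.card_pos]
      have h6 : (0:ℤ) < (Cᶜ.card : ℤ) := by
        rw [hCcard]
        have : (4:ℤ) ≤ (Fintype.card (A j) : ℤ) := by exact_mod_cast hk j
        linarith
      exact_mod_cast h6
    have hai0 : 0 ≤ alphaNum A i := alpha_nonneg hFiD hRcne
    have haj0 : 0 ≤ alphaNum A j := alpha_nonneg hFjD hCcne
    have hkey := key_ineq (Fintype.card (A i) : ℤ) (Fintype.card (A j) : ℤ)
      (fNum A i) (fNum A j) (s : ℤ) (alphaNum A i) (alphaNum A j)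
      ((R' \ R).card : ℤ) ((C' \ C).card : ℤ)
      (by exact_mod_cast hk i) (by exact_mod_cast hk j)
      hfi0 hfj0 hfiB hfjB hai0 haj0
      (by push_cast at halphai ⊢; linarith)
      (by push_cast at halphaj ⊢; linarith)
      (by positivity) hrfi (by positivity) hcfj (by positivity)
    have hregZ : (#region : ℤ)
        = ((Fintype.card (A i) : ℤ) - fNum A i) * ((Fintype.card (A j) : ℤ) - fNum A j)
          * (s : ℤ) := by
      rw [hreg]
      push_cast [hRcard, hCcard]
      try ring
    have hBZ : (#B : ℤ) = ((R' \ R).card : ℤ) * ((C' \ C).card : ℤ) * (s : ℤ) := by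
      rw [hB]; push_cast; ring
    have hcard1' : (#region : ℤ) ≤ (#(Rᶜ.biUnion X) : ℤ) + #(Cᶜ.biUnion Y)
        + (#B + #P + #Q) := by exact_mod_cast hcard1
    rw [hregZ, hBZ] at hcard1'
    rw [hRcard] at hXle
    rw [hCcard] at hYle
    rw [hRR'card] at hPle
    rw [hCC'card] at hQle
    linarith
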